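/- Let 0 < c ≤ 1 and let a, b : [0,∞) → (0,∞) be differentiable functions satisfying a'(t) ≤ −2c·a(t)²/b(t) and b'(t) ≤ 2(1−c)·a(t) for all t ≥ 0. Then for every t ≥ 0: a(t) ≤ a(0)·(1 + 2(a(0)/b(0))·t)^{−c} and b(t) ≤ b(0)·(1 + 2(a(0)/b(0))·t)^{1−c}. -/

import Mathlib

open Real

/-- If `F` is continuous on `[0,∞)` and has nonnegative derivative on `(0,∞)`,
then `F 0 ≤ F t` for all `t ≥ 0`. -/
private lemma mono_aux (F : ℝ → ℝ) (hF : ContinuousOn F (Set.Ici 0))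
    (h : ∀ t : ℝ, 0 < t → ∃ F', HasDerivAt F F' t ∧ 0 ≤ F') :
    ∀ t : ℝ, 0 ≤ t → F 0 ≤ F t := by
  have hmono : MonotoneOn F (Set.Ici 0) := by
    apply monotoneOn_of_deriv_nonneg (convex_Ici 0) hF
    · intro x hx
      rw [interior_Ici] at hx
      obtain ⟨F', hF', _⟩ := h x hx
      exact hF'.differentiableAt.differentiableWithinAt
    · intro x hx
      rw [interior_Ici] at hx
      obtain ⟨F', hF', h0⟩ := h x hx
      rw [hF'.deriv]; exact h0
  exact fun t ht => hmono Set.self_mem_Ici ht ht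

/-- integration of the system of differential inequalities
a' ≤ −2c a²/b, b' ≤ 2(1−c)a with 0 < c ≤ 1 and positive a, b on [0,∞) yields
a(t) ≤ a(0)(1 + 2(a(0)/b(0))t)^{−c} and b(t) ≤ b(0)(1 + 2(a(0)/b(0))t)^{1−c}. -/
theorem ode_system_decay (c : ℝ) (hc0 : 0 < c) (hc1 : c ≤ 1)
    (a b : ℝ → ℝ) (ha : Differentiable ℝ a) (hb : Differentiable ℝ b)
    (hapos : ∀ t : ℝ, 0 ≤ t → 0 < a t) (hbpos : ∀ t : ℝ, 0 ≤ t → 0 < b t)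
    (hda : ∀ t : ℝ, 0 ≤ t → deriv a t ≤ -2 * c * (a t) ^ 2 / b t)
    (hdb : ∀ t : ℝ, 0 ≤ t → deriv b t ≤ 2 * (1 - c) * a t) :
    ∀ t : ℝ, 0 ≤ t →
      a t ≤ a 0 * (1 + 2 * (a 0 / b 0) * t) ^ (-c) ∧
      b t ≤ b 0 * (1 + 2 * (a 0 / b 0) * t) ^ (1 - c) := by
  have ha0 := hapos 0 le_rfl
  have hb0 := hbpos 0 le_rfl
  set r : ℝ := a 0 / b 0 with hr
  have hrpos : 0 < r := div_pos ha0 hb0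
  have hP : ∀ t : ℝ, 0 ≤ t → (0:ℝ) < 1 + 2 * r * t := by
    intro t ht; nlinarith
  -- b bound
  have hbB : ∀ t : ℝ, 0 ≤ t → b t ≤ b 0 * (1 + 2 * r * t) ^ (1 - c) := by
    rcases eq_or_lt_of_le hc1 with hc1' | hc1'
    · -- c = 1
      intro t ht
      have hpow : (1 + 2 * r * t) ^ (1 - c) = 1 := by
        rw [hc1']; norm_num
      rw [hpow, mul_one]
      have hmono := mono_aux (fun s => -b s)
        (hb.continuous.neg.continuousOn)
        (by
          intro s hs
          refine ⟨-(deriv b s), ((hb s).hasDerivAt).neg, ?_⟩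
          have := hdb s hs.le
          rw [hc1'] at this
          simp at this
          linarith)
      have := hmono t ht
      simpa using this
    · -- c < 1
      have h1c : 0 < 1 - c := by linarith
      -- Step K : a^{1-c} b^c is nonincreasing
      have hK : ∀ t : ℝ, 0 ≤ t →
          a t ^ (1 - c) * b t ^ c ≤ a 0 ^ (1 - c) * b 0 ^ c := by
        have hmono := mono_aux
          (fun s => a 0 ^ (1 - c) * b 0 ^ c - a s ^ (1 - c) * b s ^ c)
          (by
            apply ContinuousOn.sub continuousOn_const
            exact ((ha.continuous.rpow_const fun x => Or.inr h1c.le).mul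
              (hb.continuous.rpow_const fun x => Or.inr hc0.le)).continuousOn)
          (by
            intro s hs
            have hA := hapos s hs.le
            have hB := hbpos s hs.le
            have h1 : HasDerivAt (fun u => a u ^ (1 - c))
                (deriv a s * (1 - c) * a s ^ (1 - c - 1)) s :=
              ((ha s).hasDerivAt).rpow_const (Or.inl hA.ne')
            have h2 : HasDerivAt (fun u => b u ^ c)
                (deriv b s * c * b s ^ (c - 1)) s :=
              ((hb s).hasDerivAt).rpow_const (Or.inl hB.ne')
            refine ⟨-(deriv a s * (1 - c) * a s ^ (1 - c - 1) * b s ^ c +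
              a s ^ (1 - c) * (deriv b s * c * b s ^ (c - 1))),
              ((h1.mul h2).neg).const_add _, ?_⟩
            rw [neg_nonneg]
            -- show derivative ≤ 0
            have hda' : deriv a s * b s ≤ -2 * c * a s ^ 2 := by
              have := hda s hs.le
              rwa [le_div_iff₀ hB] at this
            have hdb' := hdb s hs.le
            have e1 : a s ^ (1 - c - 1) = a s ^ (-c) := by
              rw [show (1 - c - 1) = -c by ring]
            have e2 : b s ^ c = b s * b s ^ (c - 1) := by
              have h := Real.rpow_add hB 1 (c - 1)
              rw [Real.rpow_one] at h
              rw [show (1:ℝ) + (c - 1) = c by ring] at h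
              exact h
            have e3 : a s ^ (1 - c) * a s = a s ^ 2 * a s ^ (-c) := by
              have h1 := Real.rpow_add hA (1 - c) 1
              rw [Real.rpow_one] at h1
              have h2 := Real.rpow_add hA 2 (-c)
              have h3 : a s ^ ((2:ℝ)) = a s ^ (2:ℕ) := by
                rw [show (2:ℝ) = ((2:ℕ):ℝ) by norm_num, Real.rpow_natCast]
              calc a s ^ (1 - c) * a s = a s ^ ((1 - c) + 1) := h1.symm
                _ = a s ^ (2 + -c) := by congr 1; ring
                _ = a s ^ (2:ℕ) * a s ^ (-c) := by rw [h2, h3]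
            have hx : (0:ℝ) < a s ^ (-c) := Real.rpow_pos_of_pos hA _
            have hw : (0:ℝ) < b s ^ (c - 1) := Real.rpow_pos_of_pos hB _
            have hz : (0:ℝ) < a s ^ (1 - c) := Real.rpow_pos_of_pos hA _
            -- term 1
            have t1 : deriv a s * (1 - c) * a s ^ (1 - c - 1) * b s ^ c ≤
                -2 * c * a s ^ 2 * ((1 - c) * a s ^ (-c) * b s ^ (c - 1)) := by
              rw [e1, e2]
              have hfac : (0:ℝ) ≤ (1 - c) * a s ^ (-c) * b s ^ (c - 1) :=
                by positivity
              calc deriv a s * (1 - c) * a s ^ (-c) * (b s * b s ^ (c - 1))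
                  = (deriv a s * b s) * ((1 - c) * a s ^ (-c) * b s ^ (c - 1)) := by
                    ring
                _ ≤ (-2 * c * a s ^ 2) * ((1 - c) * a s ^ (-c) * b s ^ (c - 1)) :=
                    mul_le_mul_of_nonneg_right hda' hfac
                _ = -2 * c * a s ^ 2 * ((1 - c) * a s ^ (-c) * b s ^ (c - 1)) := by
                    ring
            -- term 2
            have t2 : a s ^ (1 - c) * (deriv b s * c * b s ^ (c - 1)) ≤
                a s ^ (1 - c) * (2 * (1 - c) * a s * c * b s ^ (c - 1)) := by
              apply mul_le_mul_of_nonneg_left _ hz.le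
              apply mul_le_mul_of_nonneg_right _ hw.le
              exact mul_le_mul_of_nonneg_right hdb' hc0.le
            have e4 : a s ^ (1 - c) * (2 * (1 - c) * a s * c * b s ^ (c - 1)) =
                2 * c * a s ^ 2 * ((1 - c) * a s ^ (-c) * b s ^ (c - 1)) := by
              have : a s ^ (1 - c) * a s * (2 * (1 - c) * c * b s ^ (c - 1)) =
                  a s ^ 2 * a s ^ (-c) * (2 * (1 - c) * c * b s ^ (c - 1)) := by
                rw [e3]
              linarith [this]
            nlinarith [t1, t2, e4])
        intro t ht
        have := hmono t ht
        simp only [sub_self] at this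
        linarith
      -- Step K' : a * b^{c/(1-c)} is bounded by its initial value
      have hKt : ∀ t : ℝ, 0 ≤ t →
          a t * b t ^ (c / (1 - c)) ≤ a 0 * b 0 ^ (c / (1 - c)) := by
        intro t ht
        have hA := hapos t ht
        have hB := hbpos t ht
        have h := Real.rpow_le_rpow (by positivity) (hK t ht)
          (by positivity : (0:ℝ) ≤ 1 / (1 - c))
        rw [Real.mul_rpow (by positivity) (by positivity),
            Real.mul_rpow (by positivity) (by positivity),
            ← Real.rpow_mul hA.le, ← Real.rpow_mul hB.le,
            ← Real.rpow_mul ha0.le, ← Real.rpow_mul hb0.le,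
            show (1 - c) * (1 / (1 - c)) = 1 by field_simp,
            show c * (1 / (1 - c)) = c / (1 - c) by ring,
            Real.rpow_one, Real.rpow_one] at h
        exact h
      -- Step G : b^{1/(1-c)} grows at most linearly
      have hG : ∀ t : ℝ, 0 ≤ t →
          b t ^ (1 / (1 - c)) ≤ b 0 ^ (1 / (1 - c)) * (1 + 2 * r * t) := by
        have hmono := mono_aux
          (fun s => 2 * a 0 * b 0 ^ (c / (1 - c)) * s - b s ^ (1 / (1 - c)))
          (by
            apply ContinuousOn.sub
            · exact (continuous_const.mul continuous_id).continuousOn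
            · exact (hb.continuous.rpow_const fun x => Or.inr (by positivity)).continuousOn)
          (by
            intro s hs
            have hB := hbpos s hs.le
            have h2 : HasDerivAt (fun u => b u ^ (1 / (1 - c)))
                (deriv b s * (1 / (1 - c)) * b s ^ (1 / (1 - c) - 1)) s :=
              ((hb s).hasDerivAt).rpow_const (Or.inl hB.ne')
            have hlin : HasDerivAt (fun u : ℝ => 2 * a 0 * b 0 ^ (c / (1 - c)) * u)
                (2 * a 0 * b 0 ^ (c / (1 - c))) s := by
              simpa using (hasDerivAt_id s).const_mul (2 * a 0 * b 0 ^ (c / (1 - c)))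
            refine ⟨_, hlin.sub h2, ?_⟩
            rw [sub_nonneg]
            have eexp : 1 / (1 - c) - 1 = c / (1 - c) := by field_simp; ring
            rw [eexp]
            have hw : (0:ℝ) < b s ^ (c / (1 - c)) := Real.rpow_pos_of_pos hB _
            have step1 : deriv b s * (1 / (1 - c)) * b s ^ (c / (1 - c)) ≤
                2 * a s * b s ^ (c / (1 - c)) := by
              have := hdb s hs.le
              have h' : deriv b s * (1 / (1 - c)) ≤ 2 * a s := by
                rw [mul_one_div, div_le_iff₀ h1c]
                nlinarith [this]
              exact mul_le_mul_of_nonneg_right h' hw.le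
            have step2 : 2 * (a s * b s ^ (c / (1 - c))) ≤
                2 * (a 0 * b 0 ^ (c / (1 - c))) := by
              have := hKt s hs.le
              linarith
            linarith [step1, step2])
        intro t ht
        have h := hmono t ht
        simp only [mul_zero, zero_sub, sub_nonneg, neg_le_sub_iff_le_add] at h
        have e5 : b 0 ^ (1 / (1 - c)) = b 0 * b 0 ^ (c / (1 - c)) := by
          have h' := Real.rpow_add hb0 1 (c / (1 - c))
          rw [Real.rpow_one] at h'
          rw [show (1:ℝ) + c / (1 - c) = 1 / (1 - c) by field_simp; ring] at h'
          exact h'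
        have e6 : 2 * a 0 * b 0 ^ (c / (1 - c)) * t =
            b 0 ^ (1 / (1 - c)) * (2 * r * t) := by
          rw [e5, hr]
          field_simp
        nlinarith [h, e5, e6]
      -- conclude b bound
      intro t ht
      have hB := hbpos t ht
      have hPt := hP t ht
      have h := Real.rpow_le_rpow (by positivity) (hG t ht)
        (by linarith : (0:ℝ) ≤ 1 - c)
      rw [← Real.rpow_mul hB.le,
          show (1 / (1 - c)) * (1 - c) = 1 by field_simp,
          Real.rpow_one,
          Real.mul_rpow (by positivity) hPt.le,
          ← Real.rpow_mul hb0.le,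
          show (1 / (1 - c)) * (1 - c) = 1 by field_simp,
          Real.rpow_one] at h
      exact h
  -- a bound
  have haB : ∀ t : ℝ, 0 ≤ t → a t ≤ a 0 * (1 + 2 * r * t) ^ (-c) := by
    have hmono := mono_aux
      (fun s => (a s)⁻¹ - (a 0)⁻¹ * (1 + 2 * r * s) ^ c)
      (by
        apply ContinuousOn.sub
        · exact ContinuousOn.inv₀ ha.continuous.continuousOn
            (fun x hx => (hapos x hx).ne')
        · exact (continuous_const.mul
            ((continuous_const.add (continuous_const.mul continuous_id)).rpow_const
              fun x => Or.inr hc0.le)).continuousOn)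
      (by
        intro s hs
        have hA := hapos s hs.le
        have hB := hbpos s hs.le
        have hPs := hP s hs.le
        have hinv : HasDerivAt (fun u => (a u)⁻¹)
            (-(deriv a s) / a s ^ 2) s := ((ha s).hasDerivAt).inv hA.ne'
        have hlin : HasDerivAt (fun u : ℝ => 1 + 2 * r * u) (2 * r) s := by
          simpa using ((hasDerivAt_id s).const_mul (2 * r)).const_add 1
        have hpow : HasDerivAt (fun u : ℝ => (1 + 2 * r * u) ^ c)
            (2 * r * c * (1 + 2 * r * s) ^ (c - 1)) s :=
          hlin.rpow_const (Or.inl hPs.ne')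
        refine ⟨_, hinv.sub (hpow.const_mul (a 0)⁻¹), ?_⟩
        rw [sub_nonneg]
        -- key estimates
        have key1 : 2 * c / b s ≤ -(deriv a s) / a s ^ 2 := by
          rw [div_le_div_iff₀ hB (by positivity)]
          have hda' : deriv a s * b s ≤ -2 * c * a s ^ 2 := by
            have := hda s hs.le
            rwa [le_div_iff₀ hB] at this
          nlinarith [hda']
        have hPe : (1 + 2 * r * s) ^ (c - 1) = ((1 + 2 * r * s) ^ (1 - c))⁻¹ := by
          rw [show c - 1 = -(1 - c) by ring, Real.rpow_neg hPs.le]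
        have hQ : (0:ℝ) < (1 + 2 * r * s) ^ (1 - c) := Real.rpow_pos_of_pos hPs _
        have hbb : b s ≤ b 0 * (1 + 2 * r * s) ^ (1 - c) := hbB s hs.le
        have key2 : (a 0)⁻¹ * (2 * r * c * (1 + 2 * r * s) ^ (c - 1)) ≤
            2 * c / b s := by
          rw [hPe]
          have e7 : (a 0)⁻¹ * (2 * r * c * ((1 + 2 * r * s) ^ (1 - c))⁻¹) =
              2 * c / (b 0 * (1 + 2 * r * s) ^ (1 - c)) := by
            rw [hr]
            field_simp
          rw [e7, div_le_div_iff₀ (by positivity) hB]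
          nlinarith [hbb, hc0]
        linarith [key1, key2])
    intro t ht
    have h := hmono t ht
    have hPt := hP t ht
    simp only [mul_zero, add_zero, Real.one_rpow, mul_one, sub_self] at h
    -- h : 0 ≤ (a t)⁻¹ - (a 0)⁻¹ * (1 + 2*r*t)^c
    have hA := hapos t ht
    have hPc : (0:ℝ) < (1 + 2 * r * t) ^ c := Real.rpow_pos_of_pos hPt _
    rw [Real.rpow_neg hPt.le]
    rw [sub_nonneg] at h
    have h2 : a t * ((a 0)⁻¹ * (1 + 2 * r * t) ^ c) ≤ a t * (a t)⁻¹ :=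
      mul_le_mul_of_nonneg_left h hA.le
    rw [mul_inv_cancel₀ hA.ne'] at h2
    have e0 : a 0 * (a 0)⁻¹ = 1 := mul_inv_cancel₀ ha0.ne'
    rw [← div_eq_mul_inv, le_div_iff₀ hPc]
    nlinarith [mul_le_mul_of_nonneg_left h2 ha0.le, e0, hA, hPc]
  exact fun t ht => ⟨haB t ht, hbB t ht⟩
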